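/- Let A be an integral domain, P ∈ A[Y] monic of degree n ≥ 1, and p a positive divisor of n whose image in A is invertible. Then for every monic polynomial Q ∈ A[Y] of degree n/p, applying the Tschirnhausen operator τ_P to Q exactly n/p times yields the p-th approximate root: τ_P∘τ_P∘⋯∘τ_P (n/p times) applied to Q equals √[p]{P}. -/

import Mathlib

open scoped Classical

/-- `Q` is the `p`-th approximate root of `P`: `Q` is monic of degree `deg P / p` and
`deg (P - Q ^ p) < deg P - deg P / p`. -/
def IsApproxRoot {A : Type*} [CommRing A] (P Q : Polynomial A) (p : ℕ) : Prop :=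
  Q.Monic ∧ Q.natDegree = P.natDegree / p ∧
    (P - Q ^ p).degree < ((P.natDegree - P.natDegree / p : ℕ) : WithBot ℕ)

/-- The coefficient `a_i` of `Q^(s-i)` in the `Q`-adic expansion
`P = a₀ Q^s + a₁ Q^(s-1) + ⋯ + a_s` of `P`, where `s = ⌊deg P / deg Q⌋`.  (When `Q` is
monic of positive degree this expansion exists and is unique, so the choice below picks
out the actual expansion.) -/
noncomputable def adicCoeff {A : Type*} [CommRing A] (P Q : Polynomial A) (i : ℕ) :
    Polynomial A :=
  if h : ∃ a : ℕ → Polynomial A, (∀ j, (a j).degree < Q.degree) ∧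
      P = ∑ j ∈ Finset.range (P.natDegree / Q.natDegree + 1),
        a j * Q ^ (P.natDegree / Q.natDegree - j)
  then h.choose i else 0

/-- The Tschirnhausen operator `τ_P (Q) = Q + (1/s) a₁`, where `a₁` is the coefficient of
`Q^(s-1)` in the `Q`-adic expansion of `P` and `s = deg P / deg Q`. -/
noncomputable def tau {A : Type*} [CommRing A] (P Q : Polynomial A) : Polynomial A :=
  Q + Polynomial.C (Ring.inverse ((P.natDegree / Q.natDegree : ℕ) : A)) * adicCoeff P Q 1

section AuxApproxRoot
open Polynomial Finset

private lemma zero_digits {A : Type*} [CommRing A] [IsDomain A] {Q : Polynomial A} (hQ : Q.Monic) :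
    ∀ (s : ℕ) (c : ℕ → Polynomial A), (∀ j, (c j).degree < Q.degree) →
      (∑ j ∈ Finset.range s, c j * Q ^ j) = 0 → ∀ j < s, c j = 0 := by
  intro s
  induction s with
  | zero => intro c _ _ j hj; omega
  | succ t ih =>
    intro c hc hsum j hj
    have hsplit : ∑ j ∈ Finset.range (t+1), c j * Q ^ j
        = c 0 + Q * ∑ j ∈ Finset.range t, c (j+1) * Q ^ j := by
      rw [Finset.sum_range_succ', Finset.mul_sum]
      simp only [pow_zero, mul_one]
      rw [add_comm]
      congr 1
      exact Finset.sum_congr rfl fun i _ => by ring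
    rw [hsplit] at hsum
    have hdvd : Q ∣ c 0 := ⟨-(∑ j ∈ Finset.range t, c (j+1) * Q ^ j), by linear_combination hsum⟩
    have hc0 : c 0 = 0 := eq_zero_of_dvd_of_degree_lt hdvd (hc 0)
    have hT : (∑ j ∈ Finset.range t, c (j+1) * Q ^ j) = 0 := by
      rcases mul_eq_zero.mp (by linear_combination hsum - hc0 : Q * (∑ j ∈ Finset.range t, c (j+1) * Q ^ j) = 0) with h | h
      · exact absurd h hQ.ne_zero
      · exact h
    rcases Nat.eq_zero_or_pos j with rfl | hjpos
    · exact hc0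
    · obtain ⟨j', rfl⟩ := Nat.exists_eq_add_of_le hjpos
      have := ih (fun i => c (i+1)) (fun i => hc (i+1)) hT j' (by omega)
      simpa [add_comm] using this

private lemma exists_digits {A : Type*} [CommRing A] [IsDomain A] {Q : Polynomial A} (hQ : Q.Monic) :
    ∀ (t : ℕ) (R : Polynomial A), R.degree < ((t * Q.natDegree : ℕ) : WithBot ℕ) →
      ∃ r : ℕ → Polynomial A, (∀ j, (r j).degree < Q.degree) ∧
        R = ∑ j ∈ Finset.range t, r j * Q ^ j := by
  intro t
  induction t with
  | zero =>
    intro R hR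
    have hR0 : R = 0 := by
      by_contra h
      rw [degree_eq_natDegree h] at hR
      simp only [zero_mul, Nat.cast_zero] at hR
      exact absurd hR (by exact_mod_cast Nat.not_lt_zero _)
    refine ⟨fun _ => 0, fun j => ?_, by simp [hR0]⟩
    simp only [degree_zero]
    exact lt_of_lt_of_le (WithBot.bot_lt_coe _) (le_of_eq (degree_eq_natDegree hQ.ne_zero).symm)
  | succ t ih =>
    intro R hR
    have hdivdeg : (R /ₘ Q).degree < ((t * Q.natDegree : ℕ) : WithBot ℕ) := by
      rcases eq_or_ne (R /ₘ Q) 0 with h | h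
      · rw [h, degree_zero]; exact WithBot.bot_lt_coe _
      · have hRne : R ≠ 0 := fun hr => h (by simp [hr])
        have hnR : R.natDegree < (t+1) * Q.natDegree := by
          rwa [← natDegree_lt_iff_degree_lt hRne] at hR
        have hge : Q.natDegree ≤ R.natDegree := by
          by_contra hlt
          exact h ((divByMonic_eq_zero_iff hQ).mpr (by
            rw [degree_eq_natDegree hRne, degree_eq_natDegree hQ.ne_zero]
            exact_mod_cast Nat.lt_of_not_le hlt))
        rw [degree_eq_natDegree h, natDegree_divByMonic R hQ]
        have hexp : (t+1) * Q.natDegree = t * Q.natDegree + Q.natDegree := by ring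
        exact_mod_cast by omega
    obtain ⟨s, hs, hseq⟩ := ih (R /ₘ Q) hdivdeg
    refine ⟨fun j => if j = 0 then R %ₘ Q else s (j-1), fun j => ?_, ?_⟩
    · by_cases hj : j = 0
      · simp only [hj, if_pos rfl]; exact degree_modByMonic_lt R hQ
      · simp only [if_neg hj]; exact hs (j-1)
    · rw [Finset.sum_range_succ']
      simp only [if_pos rfl, pow_zero, mul_one]
      have : ∀ k ∈ Finset.range t, (if k + 1 = 0 then R %ₘ Q else s (k+1-1)) * Q ^ (k+1)
          = Q * (s k * Q ^ k) := by
        intro k _; rw [if_neg (Nat.succ_ne_zero k), Nat.add_sub_cancel]; ring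
      rw [Finset.sum_congr rfl this, ← Finset.mul_sum, ← hseq, add_comm]
      exact (modByMonic_add_div R Q).symm

private lemma adicCoeff_one_eq {A : Type*} [CommRing A] [IsDomain A] {P Q : Polynomial A}
    (hQ : Q.Monic) (hQ0 : 0 < Q.natDegree) {p : ℕ} (hp : 0 < p)
    (hquot : P.natDegree / Q.natDegree = p)
    (r : ℕ → Polynomial A) (hr : ∀ j, (r j).degree < Q.degree)
    (hPr : P = Q ^ p + ∑ j ∈ Finset.range p, r j * Q ^ j) :
    adicCoeff P Q 1 = r (p - 1) := by
  have hdegQpos : (0 : WithBot ℕ) < Q.degree := by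
    rw [degree_eq_natDegree hQ.ne_zero]; exact_mod_cast hQ0
  set a : ℕ → Polynomial A := fun i => if i = 0 then 1 else r (p - i) with ha
  have haj : ∀ j, (a j).degree < Q.degree := by
    intro j
    by_cases hj : j = 0
    · simpa [ha, hj, degree_one] using hdegQpos
    · simpa [ha, hj] using hr (p - j)
  have hsum : P = ∑ j ∈ Finset.range (p + 1), a j * Q ^ (p - j) := by
    rw [Finset.sum_range_succ']
    have h0 : a 0 * Q ^ (p - 0) = Q ^ p := by simp [ha]
    have h1 : ∀ k ∈ Finset.range p, a (k+1) * Q ^ (p - (k+1)) = r (p-1-k) * Q ^ (p-1-k) := by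
      intro k hk
      have hne : k + 1 ≠ 0 := Nat.succ_ne_zero k
      simp only [ha, if_neg hne]
      have e : p - (k+1) = p-1-k := by omega
      rw [e]
    rw [h0, Finset.sum_congr rfl h1, Finset.sum_range_reflect (fun j => r j * Q ^ j) p]
    rw [add_comm]; exact hPr
  have hex : ∃ a : ℕ → Polynomial A, (∀ j, (a j).degree < Q.degree) ∧
      P = ∑ j ∈ Finset.range (P.natDegree / Q.natDegree + 1),
        a j * Q ^ (P.natDegree / Q.natDegree - j) := by
    exact ⟨a, haj, by rw [hquot]; exact hsum⟩
  rw [adicCoeff, dif_pos hex]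
  obtain ⟨hb1, hb2⟩ := hex.choose_spec
  set b := hex.choose with hbdef
  rw [hquot] at hb2
  -- uniqueness
  have hkey : ∑ j ∈ Finset.range (p+1), (b (p - j) - a (p - j)) * Q ^ j = 0 := by
    have hrefl : ∀ (c : ℕ → Polynomial A),
        ∑ j ∈ Finset.range (p+1), c (p - j) * Q ^ j
          = ∑ j ∈ Finset.range (p+1), c j * Q ^ (p - j) := by
      intro c
      have := Finset.sum_range_reflect (fun j => c (p - j) * Q ^ j) (p+1)
      rw [← this]
      refine Finset.sum_congr rfl fun j hj => ?_
      rw [Finset.mem_range] at hj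
      congr 2 <;> omega
    have : ∑ j ∈ Finset.range (p+1), (b (p - j) - a (p - j)) * Q ^ j
        = ∑ j ∈ Finset.range (p+1), b (p - j) * Q ^ j
          - ∑ j ∈ Finset.range (p+1), a (p - j) * Q ^ j := by
      rw [← Finset.sum_sub_distrib]
      exact Finset.sum_congr rfl fun j _ => by ring
    rw [this, hrefl b, hrefl a, ← hb2, ← hsum, sub_self]
  have hz := zero_digits hQ (p+1) (fun j => b (p - j) - a (p - j))
    (fun j => lt_of_le_of_lt (degree_sub_le _ _) (max_lt (hb1 _) (haj _)))
    hkey (p - 1) (by omega)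
  have : b (p - (p-1)) = a (p - (p-1)) := by
    have := sub_eq_zero.mp hz; exact this
  rw [show p - (p-1) = 1 by omega] at this
  rw [this, ha]
  simp

private lemma tau_step {A : Type*} [CommRing A] [IsDomain A] {P Q : Polynomial A} {n d p m : ℕ}
    (hQ : Q.Monic) (hQd : Q.natDegree = d) (hd : 0 < d) (hn : n = p * d) (hp : 0 < p)
    (hPdeg : P.natDegree = n) (hinv : IsUnit ((p : ℕ) : A))
    (hm1 : 1 ≤ m) (hmd : m ≤ d + 1)
    (hR : (P - Q ^ p).degree < ((n + 1 - m : ℕ) : WithBot ℕ)) :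
    (tau P Q).Monic ∧ (tau P Q).natDegree = d ∧
      (P - (tau P Q) ^ p).degree < ((n + 1 - min (2 * m) (d + 1) : ℕ) : WithBot ℕ) := by
  have hQdeg : Q.degree = (d : WithBot ℕ) := by
    rw [degree_eq_natDegree hQ.ne_zero, hQd]
  set R := P - Q ^ p with hRdef
  have hRn : R.degree < ((p * Q.natDegree : ℕ) : WithBot ℕ) := by
    refine lt_of_lt_of_le hR ?_
    rw [hQd]
    exact_mod_cast by omega
  obtain ⟨r, hr, hRsum⟩ := exists_digits hQ p R hRn
  have hquot : P.natDegree / Q.natDegree = p := by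
    rw [hPdeg, hQd, hn, Nat.mul_div_cancel _ hd]
  have hP_eq : P = Q ^ p + ∑ j ∈ Finset.range p, r j * Q ^ j := by
    rw [← hRsum, hRdef]; ring
  have hA1 : adicCoeff P Q 1 = r (p - 1) :=
    adicCoeff_one_eq hQ (hQd ▸ hd) hp hquot r hr hP_eq
  set c := Polynomial.C (Ring.inverse ((p : ℕ) : A)) * r (p - 1) with hcdef
  have htau : tau P Q = Q + c := by rw [tau, hquot, hA1]
  -- tail bound
  have htail : (∑ j ∈ Finset.range (p-1), r j * Q ^ j).degree < ((n - d : ℕ) : WithBot ℕ) := by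
    refine lt_of_le_of_lt (degree_sum_le _ _) ?_
    rw [Finset.sup_lt_iff (WithBot.bot_lt_coe _)]
    intro j hj
    rw [Finset.mem_range] at hj
    rcases eq_or_ne (r j) 0 with h0 | h0
    · rw [h0, zero_mul, degree_zero]; exact WithBot.bot_lt_coe _
    · rw [degree_mul, degree_pow, degree_eq_natDegree h0, hQdeg]
      have hu : (r j).natDegree < d :=
        (natDegree_lt_iff_degree_lt h0).mpr (hQdeg ▸ hr j)
      have : ((r j).natDegree : WithBot ℕ) + j • (d : WithBot ℕ)
          = (((r j).natDegree + j * d : ℕ) : WithBot ℕ) := by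
        push_cast [nsmul_eq_mul]; ring
      rw [this]
      have harith : (r j).natDegree + j * d < n - d := by
        have h1 : (j + 1) * d ≤ (p - 1) * d := Nat.mul_le_mul_right d (by omega)
        have h2 : (p - 1) * d = p * d - d := by
          cases p with
          | zero => omega
          | succ q => simp [Nat.succ_sub_one]; ring_nf; omega
        have h3 : (j+1) * d = j * d + d := by ring
        omega
      exact_mod_cast harith
  -- r (p-1) bound
  have hrtop : (r (p-1)).degree < ((d + 1 - m : ℕ) : WithBot ℕ) := by
    have hsplit : r (p-1) * Q ^ (p-1) = R - ∑ j ∈ Finset.range (p-1), r j * Q ^ j := by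
      rw [hRsum]
      have : p = (p-1) + 1 := by omega
      rw [this, Finset.sum_range_succ]
      simp only [← this]
      ring
    rcases eq_or_ne (r (p-1)) 0 with h0 | h0
    · rw [h0, degree_zero]; exact WithBot.bot_lt_coe _
    · have hdegmul : (r (p-1) * Q ^ (p-1)).degree < ((n + 1 - m : ℕ) : WithBot ℕ) := by
        rw [hsplit]
        refine lt_of_le_of_lt (degree_sub_le _ _) (max_lt hR (lt_of_lt_of_le htail ?_))
        exact_mod_cast by omega
      rw [degree_mul, degree_pow, degree_eq_natDegree h0, hQdeg] at hdegmul
      have : ((r (p-1)).natDegree : WithBot ℕ) + (p-1) • (d : WithBot ℕ)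
          = (((r (p-1)).natDegree + (p-1) * d : ℕ) : WithBot ℕ) := by
        push_cast [nsmul_eq_mul]; ring
      rw [this, Nat.cast_lt] at hdegmul
      rw [degree_eq_natDegree h0, Nat.cast_lt]
      have h2 : (p - 1) * d = p * d - d := by
        cases p with
        | zero => omega
        | succ q => simp [Nat.succ_sub_one]; ring_nf; omega
      omega
  have hcb : c.degree < ((d + 1 - m : ℕ) : WithBot ℕ) := by
    calc c.degree ≤ (Polynomial.C (Ring.inverse ((p:ℕ):A))).degree + (r (p-1)).degree :=
          degree_mul_le _ _
      _ ≤ 0 + (r (p-1)).degree := add_le_add degree_C_le le_rfl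
      _ = (r (p-1)).degree := by rw [zero_add]
      _ < _ := hrtop
  have hcltQ : c.degree < Q.degree := by
    rw [hQdeg]
    exact lt_of_lt_of_le hcb (by exact_mod_cast by omega)
  have hmonic : (tau P Q).Monic := by rw [htau]; exact hQ.add_of_left hcltQ
  have hdeg' : (tau P Q).natDegree = d := by
    rw [htau]
    have := degree_add_eq_left_of_degree_lt hcltQ
    rw [← hQd]
    exact natDegree_eq_of_degree_eq this
  refine ⟨hmonic, hdeg', ?_⟩
  -- binomial expansion
  set S₂ := ∑ k ∈ Finset.Ico 2 (p+1), c ^ k * Q ^ (p - k) * ((Nat.choose p k : ℕ) : Polynomial A)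
    with hS2def
  have hkey : c * ((p : ℕ) : Polynomial A) = r (p - 1) := by
    rw [hcdef, ← Polynomial.C_eq_natCast]
    rw [mul_comm (Polynomial.C _) (r (p-1)), mul_assoc, ← Polynomial.C_mul,
      Ring.inverse_mul_cancel _ hinv, Polynomial.C_1, mul_one]
  have hrangesplit : Finset.range (p+1) = insert 0 (insert 1 (Finset.Ico 2 (p+1))) := by
    ext x
    simp only [Finset.mem_range, Finset.mem_insert, Finset.mem_Ico]
    omega
  have hbinom : (tau P Q) ^ p = Q ^ p + r (p-1) * Q ^ (p-1) + S₂ := by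
    rw [htau, add_comm Q c, add_pow, hrangesplit]
    rw [Finset.sum_insert (by simp), Finset.sum_insert (by simp)]
    have h0 : c ^ 0 * Q ^ (p - 0) * ((Nat.choose p 0 : ℕ) : Polynomial A) = Q ^ p := by
      simp
    have h1 : c ^ 1 * Q ^ (p - 1) * ((Nat.choose p 1 : ℕ) : Polynomial A)
        = r (p-1) * Q ^ (p-1) := by
      rw [pow_one, Nat.choose_one_right, mul_comm c (Q ^ (p-1)), mul_assoc, hkey]
      ring
    rw [h0, h1, hS2def]
    ring
  have hnew : P - (tau P Q) ^ p = (∑ j ∈ Finset.range (p-1), r j * Q ^ j) - S₂ := by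
    rw [hbinom, hP_eq]
    have : p = (p-1) + 1 := by omega
    rw [this, Finset.sum_range_succ, ← this]
    ring
  -- S₂ bound
  have hS2 : S₂.degree < ((n + 1 - min (2*m) (d+1) : ℕ) : WithBot ℕ) := by
    rcases eq_or_ne c 0 with hc0 | hc0
    · have : S₂ = 0 := by
        rw [hS2def]
        refine Finset.sum_eq_zero fun k hk => ?_
        rw [Finset.mem_Ico] at hk
        rw [hc0, zero_pow (by omega : k ≠ 0), zero_mul, zero_mul]
      rw [this, degree_zero]; exact WithBot.bot_lt_coe _
    · have hu : c.natDegree + m ≤ d ∧ m ≤ d := by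
        rw [degree_eq_natDegree hc0, Nat.cast_lt] at hcb
        omega
      refine lt_of_le_of_lt (degree_sum_le _ _) ?_
      rw [Finset.sup_lt_iff (WithBot.bot_lt_coe _)]
      intro k hk
      rw [Finset.mem_Ico] at hk
      refine lt_of_le_of_lt (degree_le_natDegree) ?_
      rw [Nat.cast_lt]
      have hb1 : (c ^ k * Q ^ (p - k) * ((Nat.choose p k : ℕ) : Polynomial A)).natDegree
          ≤ k * c.natDegree + (p-k) * d := by
        refine le_trans natDegree_mul_le (le_trans (add_le_add natDegree_mul_le (le_of_eq (natDegree_natCast _))) ?_)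
        rw [add_zero]
        exact add_le_add natDegree_pow_le (hQd ▸ natDegree_pow_le)
      refine lt_of_le_of_lt hb1 ?_
      -- arithmetic
      have e1 : k * c.natDegree + k * m ≤ k * d := by
        rw [← Nat.mul_add]; exact Nat.mul_le_mul_left k hu.1
      have e2 : 2 * m ≤ k * m := Nat.mul_le_mul_right m hk.1
      have e3 : k * d + (p - k) * d = p * d := by
        rw [← Nat.add_mul]
        congr 1
        omega
      have e4 : 2 * m ≤ p * d := by
        calc 2 * m ≤ 2 * d := by omega
          _ ≤ p * d := Nat.mul_le_mul_right d (by omega)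
      omega
  rw [hnew]
  refine lt_of_le_of_lt (degree_sub_le _ _) (max_lt (lt_of_lt_of_le htail ?_) hS2)
  exact_mod_cast by omega

end AuxApproxRoot

open Polynomial Finset

/-- **Computing approximate roots by iterating the Tschirnhausen operator.**
Let `P ∈ A[Y]` be monic of degree `n ≥ 1` over an integral domain and `p` a positive
divisor of `n` invertible in `A`.  Then for every monic `Q` of degree `n / p`, applying
`τ_P` exactly `n / p` times to `Q` yields the `p`-th approximate root of `P`. -/
theorem stmt_5 {A : Type*} [CommRing A] [IsDomain A] (P : Polynomial A) (n p : ℕ)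
    (hP : P.Monic) (hdeg : P.natDegree = n) (hn : 1 ≤ n) (hp : 0 < p) (hdvd : p ∣ n)
    (hinv : IsUnit (p : A)) (Q : Polynomial A) (hQ : Q.Monic) (hQdeg : Q.natDegree = n / p) :
    IsApproxRoot P ((tau P)^[n / p] Q) p := by

  set d := n / p with hddef
  have hnd : n = p * d := (Nat.mul_div_cancel' hdvd).symm
  have hd : 0 < d := by
    rcases Nat.eq_zero_or_pos d with h | h
    · rw [h, mul_zero] at hnd; omega
    · exact h
  have hdn : d ≤ n := hnd ▸ Nat.le_mul_of_pos_left d hp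
  have key : ∀ k : ℕ, ((tau P)^[k] Q).Monic ∧ ((tau P)^[k] Q).natDegree = d ∧
      (P - ((tau P)^[k] Q) ^ p).degree < ((n + 1 - min (2 ^ k) (d + 1) : ℕ) : WithBot ℕ) := by
    intro k
    induction k with
    | zero =>
      simp only [Function.iterate_zero, id]
      refine ⟨hQ, hQdeg, ?_⟩
      have hPd : P.degree = (n : WithBot ℕ) := by rw [degree_eq_natDegree hP.ne_zero, hdeg]
      have hQp : (Q ^ p).degree = (n : WithBot ℕ) := by
        rw [degree_pow, degree_eq_natDegree hQ.ne_zero, hQdeg]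
        have : p • (d : WithBot ℕ) = ((p * d : ℕ) : WithBot ℕ) := by
          push_cast [nsmul_eq_mul]; ring
        rw [this, ← hnd]
      have hlt := degree_sub_lt (hPd.trans hQp.symm) hP.ne_zero
        (by rw [hP.leadingCoeff, (hQ.pow p).leadingCoeff])
      rw [hPd] at hlt
      have hone : n + 1 - min (2 ^ 0) (d + 1) = n := by
        simp only [pow_zero]
        omega
      rw [hone]
      exact hlt
    | succ k ih =>
      obtain ⟨h1, h2, h3⟩ := ih
      have hm1 : 1 ≤ min (2 ^ k) (d + 1) := le_min Nat.one_le_two_pow (by omega)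
      have step := tau_step h1 h2 hd hnd hp hdeg hinv hm1 (min_le_right _ _) h3
      rw [Function.iterate_succ_apply']
      refine ⟨step.1, step.2.1, lt_of_lt_of_le step.2.2 ?_⟩
      have hpow : 2 ^ (k+1) = 2 * 2 ^ k := by ring
      exact_mod_cast Nat.sub_le_sub_left (by omega) (n+1)
  obtain ⟨h1, h2, h3⟩ := key d
  refine ⟨h1, by rw [h2, hdeg], ?_⟩
  have hmin : min (2 ^ d) (d + 1) = d + 1 := min_eq_right (Nat.lt_two_pow_self (n := d))
  rw [hmin] at h3
  rw [hdeg, ← hddef]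
  have : n + 1 - (d + 1) = n - d := by omega
  rw [this] at h3
  exact h3
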